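/- Let $E \subseteq L, M, N \subseteq t^{-1}E$ be lattices in $\mathcal{K}^n$ with images $U_1, U_2, U_3 \subseteq V = t^{-1}E/E \cong F^n$, and $i+j+k = n$. If $g := f^t_{ijk}(L,M,N) = k + \dim(U_1 + U_2)$ achieves the minimum among the eight cut values, then with $P = L + M$ one has $f^t_{i,j+k}(L,P) \leq \dim(U_1+U_2)$, $f^t_{j,i+k}(M,P) \leq \dim(U_1+U_2)$, $f^t_{k,i+j}(N,P) \leq k + \dim(U_1+U_2)$, and $f^t_n(P) = \dim(U_1+U_2)$, hence $f^t_{i,j+k}(L,P) + f^t_{j,i+k}(M,P) + f^t_{k,i+j}(N,P) - 2f^t_n(P) \leq f^t_{ijk}(L,M,N)$. -/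

import Mathlib

noncomputable section

/-- A lattice in `K^n`, `K = F((t))`: a finitely generated `F[[t]]`-submodule
of full rank (it spans `K^n` over `K`). -/
def IsLattice {F : Type*} [Field F] {n : ℕ}
    (L : Submodule (PowerSeries F) (Fin n → LaurentSeries F)) : Prop :=
  L.FG ∧ Submodule.span (LaurentSeries F) (L : Set (Fin n → LaurentSeries F)) = ⊤

/-- The set of values `-val (det (v 0, …, v (n-1)))` over nonzero determinants of
vectors `v m` chosen from the lattices `X m` (column `m` from lattice `X m`). -/
def detValSet {F : Type*} [Field F] {n : ℕ}
    (X : Fin n → Submodule (PowerSeries F) (Fin n → LaurentSeries F)) : Set ℤ :=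
  {z | ∃ v : Fin n → Fin n → LaurentSeries F, (∀ m, v m ∈ X m) ∧
    (Matrix.of fun p m => v m p).det ≠ 0 ∧
    z = -((Matrix.of fun p m => v m p).det).order}

/-- Column pattern for two lattices: the first `i` columns from `X`, the rest
from `Y`; `detValSet (cols2 X Y i)` computes `fᵗ_{i,n-i}(X,Y)`. -/
def cols2 {F : Type*} [Field F] {n : ℕ}
    (X Y : Submodule (PowerSeries F) (Fin n → LaurentSeries F)) (i : ℕ) :
    Fin n → Submodule (PowerSeries F) (Fin n → LaurentSeries F) :=
  fun m => if (m : ℕ) < i then X else Y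

/-- Column pattern for three lattices: first `i` columns from `X`, next `j`
from `Y`, remaining from `Z`; `detValSet (cols3 X Y Z i j)` computes
`fᵗ_{i,j,k}(X,Y,Z)` for `k = n - i - j`. -/
def cols3 {F : Type*} [Field F] {n : ℕ}
    (X Y Z : Submodule (PowerSeries F) (Fin n → LaurentSeries F)) (i j : ℕ) :
    Fin n → Submodule (PowerSeries F) (Fin n → LaurentSeries F) :=
  fun m => if (m : ℕ) < i then X else if (m : ℕ) < i + j then Y else Z

/-- The standard lattice `O^n`. -/
def stdLattice (F : Type*) [Field F] (n : ℕ) :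
    Submodule (PowerSeries F) (Fin n → LaurentSeries F) :=
  Submodule.span (PowerSeries F)
    (Set.range fun i => Pi.single i (1 : LaurentSeries F))

/-- The lattice `t⁻¹E`. -/
def tInvStdLattice (F : Type*) [Field F] (n : ℕ) :
    Submodule (PowerSeries F) (Fin n → LaurentSeries F) :=
  Submodule.span (PowerSeries F)
    (Set.range fun i => Pi.single i (HahnSeries.single (-1) (1 : F)))

section Aux

open HahnSeries

variable {F : Type*} [Field F] {n : ℕ}

theorem coeffLow_mul {x y : LaurentSeries F} {a b : ℤ}
    (hx : ∀ g < a, x.coeff g = 0) (hy : ∀ g < b, y.coeff g = 0) :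
    ∀ g < a + b, (x * y).coeff g = 0 := by
  intro g hg
  rw [HahnSeries.coeff_mul]
  apply Finset.sum_eq_zero
  rintro ⟨q, r⟩ hqr
  rw [Finset.mem_addAntidiagonal] at hqr
  obtain ⟨hq, hr, hsum⟩ := hqr
  exfalso
  rw [HahnSeries.mem_support] at hq hr
  have hqa : a ≤ q := le_of_not_gt fun h => hq (hx q h)
  have hrb : b ≤ r := le_of_not_gt fun h => hr (hy r h)
  omega

theorem coeffLow_sum {ι : Type*} (s : Finset ι) (f : ι → LaurentSeries F) (c : ℤ)
    (h : ∀ m ∈ s, ∀ g < c, (f m).coeff g = 0) :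
    ∀ g < c, (∑ m ∈ s, f m).coeff g = 0 := by
  induction s using Finset.cons_induction with
  | empty => intro g hg; simp
  | cons a s ha ih =>
    intro g hg
    rw [Finset.sum_cons, HahnSeries.coeff_add, h a (Finset.mem_cons_self a s) g hg,
      ih (fun m hm => h m (Finset.mem_cons_of_mem hm)) g hg, add_zero]

theorem coeffLow_prod {ι : Type*} (s : Finset ι) (f : ι → LaurentSeries F) (c : ι → ℤ)
    (h : ∀ m ∈ s, ∀ g < c m, (f m).coeff g = 0) :
    ∀ g < ∑ m ∈ s, c m, (∏ m ∈ s, f m).coeff g = 0 := by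
  induction s using Finset.cons_induction with
  | empty =>
    intro g hg
    rw [Finset.prod_empty, HahnSeries.coeff_one, if_neg]
    simp only [Finset.sum_empty] at hg
    omega
  | cons a s ha ih =>
    rw [Finset.prod_cons, Finset.sum_cons]
    exact coeffLow_mul (h a (Finset.mem_cons_self a s))
      (ih fun m hm => h m (Finset.mem_cons_of_mem hm))

theorem coeffLow_det {ι : Type*} [Fintype ι] [DecidableEq ι]
    (M : Matrix ι ι (LaurentSeries F)) (c : ι → ℤ)
    (h : ∀ p m, ∀ g < c m, (M p m).coeff g = 0) :
    ∀ g < ∑ m, c m, M.det.coeff g = 0 := by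
  rw [Matrix.det_apply]
  apply coeffLow_sum
  intro σ _
  have hp : ∀ g < ∑ m, c m, (∏ m, M (σ m) m).coeff g = 0 :=
    coeffLow_prod _ _ _ fun m _ => h (σ m) m
  rcases Int.units_eq_one_or (Equiv.Perm.sign σ) with h1 | h1 <;> rw [h1] <;> intro g hg
  · rw [Units.smul_def, Units.val_one, one_zsmul]; exact hp g hg
  · rw [Units.smul_def, Units.val_neg, Units.val_one, neg_one_zsmul,
      HahnSeries.coeff_neg, hp g hg, neg_zero]

theorem ps_smul (f : PowerSeries F) (x : LaurentSeries F) :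
    f • x = HahnSeries.ofPowerSeries ℤ F f * x := rfl

theorem neg_order_le {x : LaurentSeries F} {c : ℤ} (hx : x ≠ 0)
    (h : ∀ g < c, x.coeff g = 0) : -x.order ≤ -c := by
  have h1 := HahnSeries.coeff_order_eq_zero.not.2 hx
  have h2 : ¬x.order < c := fun hl => h1 (h _ hl)
  omega

theorem ofPowerSeries_coeff_neg (f : PowerSeries F) {g : ℤ} (hg : g < 0) :
    (HahnSeries.ofPowerSeries ℤ F f).coeff g = 0 := by
  rw [PowerSeries.coeff_coe, if_pos hg]

/-- The submodule of vectors all of whose coefficients below `c` vanish. -/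
def vanishBelow (F : Type*) [Field F] (n : ℕ) (c : ℤ) :
    Submodule (PowerSeries F) (Fin n → LaurentSeries F) where
  carrier := {x | ∀ p, ∀ g < c, (x p).coeff g = 0}
  add_mem' := fun hx hy p g hg => by
    simp only [Pi.add_apply, HahnSeries.coeff_add, hx p g hg, hy p g hg, add_zero]
  zero_mem' := fun p g hg => rfl
  smul_mem' := fun f x hx p g hg => by
    rw [Pi.smul_apply, ps_smul]
    exact coeffLow_mul (a := 0) (fun g' hg' => ofPowerSeries_coeff_neg f hg') (hx p) g
      (by omega)

theorem mem_vanishBelow {c : ℤ} {x : Fin n → LaurentSeries F} :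
    x ∈ vanishBelow F n c ↔ ∀ p, ∀ g < c, (x p).coeff g = 0 := Iff.rfl

theorem stdLattice_le_vanishBelow : stdLattice F n ≤ vanishBelow F n 0 := by
  rw [stdLattice, Submodule.span_le]
  rintro _ ⟨p, rfl⟩ q g hg
  show ((Pi.single p (1 : LaurentSeries F) : Fin n → LaurentSeries F) q).coeff g = 0
  rcases eq_or_ne q p with h | h
  · subst h
    rw [Pi.single_eq_same, HahnSeries.coeff_one, if_neg (by omega)]
  · rw [Pi.single_eq_of_ne h, HahnSeries.coeff_zero]

theorem tInvStdLattice_le_vanishBelow : tInvStdLattice F n ≤ vanishBelow F n (-1) := by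
  rw [tInvStdLattice, Submodule.span_le]
  rintro _ ⟨p, rfl⟩ q g hg
  show ((Pi.single p (HahnSeries.single (-1) (1:F) : LaurentSeries F) : Fin n → LaurentSeries F) q).coeff g = 0
  rcases eq_or_ne q p with h | h
  · subst h
    rw [Pi.single_eq_same, HahnSeries.coeff_single_of_ne (by omega)]
  · rw [Pi.single_eq_of_ne h, HahnSeries.coeff_zero]

theorem mem_stdLattice_of_vanish {x : Fin n → LaurentSeries F}
    (hx : ∀ p, ∀ g < (0 : ℤ), (x p).coeff g = 0) : x ∈ stdLattice F n := by
  have hx' : ∀ p : Fin n, ∃ f : PowerSeries F, HahnSeries.ofPowerSeries ℤ F f = x p := by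
    intro p
    refine ⟨PowerSeries.X ^ (x p).order.toNat * (x p).powerSeriesPart, ?_⟩
    have hord : ((x p).order.toNat : ℤ) = (x p).order := by
      rcases eq_or_ne (x p) 0 with h | h
      · simp [h]
      · have h1 := HahnSeries.coeff_order_eq_zero.not.2 h
        have h2 : ¬(x p).order < 0 := fun hl => h1 (hx p _ hl)
        omega
    exact LaurentSeries.X_order_mul_powerSeriesPart hord
  rw [show x = ∑ p : Fin n, Pi.single p (x p) from (Finset.univ_sum_single x).symm]
  apply Submodule.sum_mem
  intro p _
  obtain ⟨f, hf⟩ := hx' p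
  have h2 : Pi.single p (x p) = f • (Pi.single p (1 : LaurentSeries F) : Fin n → LaurentSeries F) := by
    funext q
    rw [Pi.smul_apply, ps_smul]
    rcases eq_or_ne q p with h | h
    · subst h
      rw [Pi.single_eq_same, Pi.single_eq_same, mul_one, hf]
    · rw [Pi.single_eq_of_ne h, Pi.single_eq_of_ne h, mul_zero]
  rw [h2]
  exact Submodule.smul_mem _ _ (Submodule.subset_span ⟨p, rfl⟩)

end Aux
section Aux2

open HahnSeries

variable {F : Type*} [Field F] {n : ℕ}

theorem single_sum {ι : Type*} (s : Finset ι) (f : ι → F) (a : ℤ) :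
    (single a (∑ m ∈ s, f m) : LaurentSeries F) = ∑ m ∈ s, (single a (f m) : LaurentSeries F) :=
  map_sum (single.addMonoidHom a) f s

theorem prod_single {ι : Type*} (s : Finset ι) (e : ι → ℤ) :
    (∏ m ∈ s, (single (e m) (1 : F) : LaurentSeries F)) = single (∑ m ∈ s, e m) 1 := by
  induction s using Finset.cons_induction with
  | empty => rw [Finset.prod_empty, Finset.sum_empty, HahnSeries.single_zero_one]
  | cons a s ha ih =>
    rw [Finset.prod_cons, Finset.sum_cons, ih, HahnSeries.single_mul_single, one_mul]

theorem coeff_neg_one_mem {X : Submodule (PowerSeries F) (Fin n → LaurentSeries F)}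
    {U : Submodule F (Fin n → F)}
    (hEX : stdLattice F n ≤ X) (hXt : X ≤ tInvStdLattice F n)
    (hU : ∀ u : Fin n → F, u ∈ U ↔
      (fun p => (HahnSeries.single (-1) (u p) : LaurentSeries F)) ∈ X)
    {x : Fin n → LaurentSeries F} (hx : x ∈ X) : (fun p => (x p).coeff (-1)) ∈ U := by
  rw [hU]
  have hxv : ∀ p, ∀ g < (-1 : ℤ), (x p).coeff g = 0 := tInvStdLattice_le_vanishBelow (hXt hx)
  have hr : x - (fun p => (single (-1) ((x p).coeff (-1)) : LaurentSeries F))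
      ∈ stdLattice F n := by
    apply mem_stdLattice_of_vanish
    intro p g hg
    simp only [Pi.sub_apply, HahnSeries.coeff_sub]
    rcases eq_or_ne g (-1) with h | h
    · subst h; rw [HahnSeries.coeff_single_same, sub_self]
    · rw [HahnSeries.coeff_single_of_ne h, hxv p g (by omega), sub_zero]
  have h2 : (fun p => (single (-1) ((x p).coeff (-1)) : LaurentSeries F))
      = x - (x - fun p => (single (-1) ((x p).coeff (-1)) : LaurentSeries F)) := by
    rw [sub_sub_cancel]
  rw [h2]
  exact Submodule.sub_mem _ hx (hEX hr)

theorem coeff_neg_one_mem_sup {X Y : Submodule (PowerSeries F) (Fin n → LaurentSeries F)}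
    {U V : Submodule F (Fin n → F)}
    (hEX : stdLattice F n ≤ X) (hXt : X ≤ tInvStdLattice F n)
    (hU : ∀ u : Fin n → F, u ∈ U ↔
      (fun p => (HahnSeries.single (-1) (u p) : LaurentSeries F)) ∈ X)
    (hEY : stdLattice F n ≤ Y) (hYt : Y ≤ tInvStdLattice F n)
    (hV : ∀ u : Fin n → F, u ∈ V ↔
      (fun p => (HahnSeries.single (-1) (u p) : LaurentSeries F)) ∈ Y)
    {x : Fin n → LaurentSeries F} (hx : x ∈ X ⊔ Y) :
    (fun p => (x p).coeff (-1)) ∈ U ⊔ V := by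
  rcases Submodule.mem_sup.1 hx with ⟨a, ha, b, hb, rfl⟩
  have h1 : (fun p => ((a + b) p).coeff (-1))
      = (fun p => (a p).coeff (-1)) + fun p => (b p).coeff (-1) := by
    funext p
    simp [HahnSeries.coeff_add]
  rw [h1]
  exact Submodule.add_mem_sup (coeff_neg_one_mem hEX hXt hU ha)
    (coeff_neg_one_mem hEY hYt hV hb)

theorem detval_le (v : Fin n → Fin n → LaurentSeries F)
    (hv : ∀ m p, ∀ g < (-1 : ℤ), (v m p).coeff g = 0)
    (W : Submodule F (Fin n → F))
    (hu : ∀ m, (fun p => (v m p).coeff (-1)) ∈ W)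
    (hdet : (Matrix.of fun p m => v m p).det ≠ 0) :
    -((Matrix.of fun p m => v m p).det).order ≤ (Module.finrank F ↥W : ℤ) := by
  classical
  set r := Module.finrank F ↥W with hr
  set b := Module.finBasis F ↥W with hb
  have key : ∀ m p, ∑ l, b.repr ⟨_, hu m⟩ l * (b l : Fin n → F) p = (v m p).coeff (-1) := by
    intro m p
    have h2 := congrArg (fun y : W => (y : Fin n → F) p) (b.sum_repr ⟨_, hu m⟩)
    simp only [Submodule.coe_sum, Submodule.coe_smul, Finset.sum_apply, Pi.smul_apply, smul_eq_mul] at h2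
    exact h2
  set A : Matrix (Fin n) (Fin n) (LaurentSeries F) := Matrix.of fun p m => v m p with hA
  set B : Matrix (Fin n) (Fin r) (LaurentSeries F) :=
    Matrix.of (fun p l => (single (-1) ((b l : Fin n → F) p) : LaurentSeries F)) with hB
  set C : Matrix (Fin r) (Fin n) (LaurentSeries F) :=
    Matrix.of (fun l m => (single 0 (b.repr ⟨_, hu m⟩ l) : LaurentSeries F)) with hC
  have hBC : ∀ p m, (B * C) p m = (single (-1) ((v m p).coeff (-1)) : LaurentSeries F) := by
    intro p m
    rw [Matrix.mul_apply]
    have h3 : ∀ l, B p l * C l m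
        = (single (-1) ((b l : Fin n → F) p * b.repr ⟨_, hu m⟩ l) : LaurentSeries F) := by
      intro l
      show (single (-1) ((b l : Fin n → F) p) : LaurentSeries F) * single 0 (b.repr ⟨_, hu m⟩ l)
        = _
      rw [HahnSeries.single_mul_single, add_zero]
    rw [Finset.sum_congr rfl fun l _ => h3 l, ← single_sum]
    rw [show ∑ l, (b l : Fin n → F) p * b.repr ⟨_, hu m⟩ l
        = ∑ l, b.repr ⟨_, hu m⟩ l * (b l : Fin n → F) p from
      Finset.sum_congr rfl fun l _ => mul_comm _ _, key m p]
  have hWm : ∀ p m, ∀ g < (0 : ℤ), ((A - B * C) p m).coeff g = 0 := by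
    intro p m g hg
    rw [Matrix.sub_apply, HahnSeries.coeff_sub, hBC p m]
    rcases eq_or_ne g (-1) with h | h
    · subst h
      rw [HahnSeries.coeff_single_same]
      exact sub_self _
    · rw [HahnSeries.coeff_single_of_ne h, show A p m = v m p from rfl,
        hv m p g (by omega), sub_zero]
  have hdetEq : A.det = (Matrix.fromBlocks (A - B * C) (-B) C 1).det := by
    rw [Matrix.det_fromBlocks_one₂₂, Matrix.neg_mul, sub_neg_eq_add, sub_eq_add_neg,
      add_assoc, neg_add_cancel, add_zero]
  have hvan : ∀ g < -(r : ℤ), A.det.coeff g = 0 := by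
    intro g hg
    rw [hdetEq]
    have hsum : ∑ m0 : Fin n ⊕ Fin r,
        Sum.elim (fun _ : Fin n => (0 : ℤ)) (fun _ : Fin r => (-1 : ℤ)) m0 = -(r : ℤ) := by
      rw [Fintype.sum_sum_type]
      simp
    apply coeffLow_det _ (Sum.elim (fun _ : Fin n => (0 : ℤ)) (fun _ : Fin r => (-1 : ℤ)))
    · rintro (p | p) (m | m) g' hg' <;> simp only [Sum.elim_inl, Sum.elim_inr] at hg'
      · rw [Matrix.fromBlocks_apply₁₁]
        exact hWm p m g' hg'
      · rw [Matrix.fromBlocks_apply₁₂, Matrix.neg_apply]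
        show (-(single (-1) ((b m : Fin n → F) p) : LaurentSeries F)).coeff g' = 0
        rw [HahnSeries.coeff_neg, HahnSeries.coeff_single_of_ne (by omega), neg_zero]
      · rw [Matrix.fromBlocks_apply₂₁]
        show ((single 0 (b.repr ⟨_, hu m⟩ p) : LaurentSeries F)).coeff g' = 0
        rw [HahnSeries.coeff_single_of_ne (by omega)]
      · rw [Matrix.fromBlocks_apply₂₂, Matrix.one_apply]
        split
        · rw [HahnSeries.coeff_one, if_neg (by omega)]
        · rw [HahnSeries.coeff_zero]
    · omega
  have hfin := neg_order_le hdet hvan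
  omega

end Aux2
section Aux3

open HahnSeries

variable {F : Type*} [Field F] {n : ℕ}

theorem detval_le' (k : ℕ) (hk : k ≤ n) (v : Fin n → Fin n → LaurentSeries F)
    (hv : ∀ m p, ∀ g < (-1 : ℤ), (v m p).coeff g = 0)
    (W : Submodule F (Fin n → F))
    (hu : ∀ m : Fin n, k ≤ (m : ℕ) → (fun p => (v m p).coeff (-1)) ∈ W)
    (hdet : (Matrix.of fun p m => v m p).det ≠ 0) :
    -((Matrix.of fun p m => v m p).det).order ≤ (k : ℤ) + Module.finrank F ↥W := by
  classical
  set S := Submodule.span F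
    (Set.range fun l : Fin k => (fun p => (v (Fin.castLE hk l) p).coeff (-1))) with hS
  have hall : ∀ m, (fun p => (v m p).coeff (-1)) ∈ W ⊔ S := by
    intro m
    by_cases h : (m : ℕ) < k
    · apply Submodule.mem_sup_right
      apply Submodule.subset_span
      refine ⟨⟨(m : ℕ), h⟩, ?_⟩
      show (fun p => (v (Fin.castLE hk ⟨(m : ℕ), h⟩) p).coeff (-1))
        = fun p => (v m p).coeff (-1)
      rw [show Fin.castLE hk ⟨(m : ℕ), h⟩ = m from Fin.ext rfl]
    · exact Submodule.mem_sup_left (hu m (le_of_not_gt h))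
  have h1 := detval_le v hv (W ⊔ S) hall hdet
  have h3 := Submodule.finrank_sup_add_finrank_inf_eq W S
  have h4 : Module.finrank F ↥S ≤ k := by
    have h5 := finrank_range_le_card (R := F)
      (fun l : Fin k => (fun p => (v (Fin.castLE hk l) p).coeff (-1)))
    simpa [Set.finrank] using h5
  omega

theorem detval_mem (X : Submodule (PowerSeries F) (Fin n → LaurentSeries F))
    (hEX : stdLattice F n ≤ X) (U : Submodule F (Fin n → F))
    (hsub : ∀ u ∈ U, (fun p => (single (-1) (u p) : LaurentSeries F)) ∈ X) :
    (Module.finrank F ↥U : ℤ) ∈ detValSet (fun _ : Fin n => X) := by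
  classical
  obtain ⟨Wc, hWc⟩ := Submodule.exists_isCompl U
  set d := Module.finrank F ↥U with hd
  set d' := Module.finrank F ↥Wc with hd'
  have hdd : d + d' = n := by
    have h0 := Submodule.finrank_add_eq_of_isCompl hWc
    rwa [Module.finrank_fin_fun] at h0
  set bU : Fin d → (Fin n → F) := fun l => ((Module.finBasis F ↥U) l : Fin n → F) with hbU
  set bW : Fin d' → (Fin n → F) := fun l => ((Module.finBasis F ↥Wc) l : Fin n → F) with hbW
  have liU : LinearIndependent F bU :=
    (Module.finBasis F ↥U).linearIndependent.map' U.subtype (Submodule.ker_subtype U)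
  have liW : LinearIndependent F bW :=
    (Module.finBasis F ↥Wc).linearIndependent.map' Wc.subtype (Submodule.ker_subtype Wc)
  have hrU : Submodule.span F (Set.range bU) ≤ U := by
    rw [Submodule.span_le]; rintro _ ⟨l, rfl⟩; exact Submodule.coe_mem _
  have hrW : Submodule.span F (Set.range bW) ≤ Wc := by
    rw [Submodule.span_le]; rintro _ ⟨l, rfl⟩; exact Submodule.coe_mem _
  have li2 : LinearIndependent F (Sum.elim bU bW) :=
    liU.sum_type liW (hWc.disjoint.mono hrU hrW)
  set e : (Fin d ⊕ Fin d') ≃ Fin n := finSumFinEquiv.trans (finCongr hdd) with he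
  set bb : Fin n → (Fin n → F) := Sum.elim bU bW ∘ e.symm with hbb
  have libb : LinearIndependent F bb := li2.comp e.symm e.symm.injective
  have hcard : Fintype.card (Fin n) = Module.finrank F (Fin n → F) := by
    rw [Module.finrank_fin_fun, Fintype.card_fin]
  have hspan := libb.span_eq_top_of_card_eq_finrank' hcard
  have hunit : IsUnit ((Pi.basisFun F (Fin n)).det bb) :=
    (Module.Basis.is_basis_iff_det (Pi.basisFun F (Fin n))).mp ⟨libb, hspan⟩
  set Mat : Matrix (Fin n) (Fin n) F := Matrix.of fun p m => bb m p with hMat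
  have hMatdet : Mat.det ≠ 0 := by
    have h6 : (Pi.basisFun F (Fin n)).det bb = Mat.det := by
      rw [Module.Basis.det_apply]
      congr 1
    rw [h6] at hunit
    exact hunit.ne_zero
  set em : Fin n → ℤ := Sum.elim (fun _ : Fin d => (-1 : ℤ)) (fun _ : Fin d' => 0) ∘ e.symm
    with hem
  set v : Fin n → Fin n → LaurentSeries F :=
    fun m p => (single (em m) (Mat p m) : LaurentSeries F) with hvdef
  have hdet2 : (Matrix.of fun p m => v m p).det = (single (-(d : ℤ)) Mat.det : LaurentSeries F) := by
    have hAeq : (Matrix.of fun p m => v m p)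
        = (Mat.map (HahnSeries.C : F →+* LaurentSeries F))
          * Matrix.diagonal (fun m => (single (em m) 1 : LaurentSeries F)) := by
      refine Matrix.ext fun p m => ?_
      rw [Matrix.mul_diagonal, Matrix.map_apply]
      show v m p = HahnSeries.C (Mat p m) * single (em m) 1
      rw [HahnSeries.C_apply, HahnSeries.single_mul_single, zero_add, mul_one, hvdef]
    have hCdet : (Mat.map (HahnSeries.C : F →+* LaurentSeries F)).det
        = HahnSeries.C Mat.det := by
      rw [← RingHom.mapMatrix_apply, ← RingHom.map_det]
    have hsem : ∑ m, em m = -(d : ℤ) := by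
      rw [hem]
      rw [show ∑ m : Fin n, (Sum.elim (fun _ : Fin d => (-1 : ℤ)) (fun _ : Fin d' => 0) ∘ e.symm) m
          = ∑ s : Fin d ⊕ Fin d', Sum.elim (fun _ : Fin d => (-1 : ℤ)) (fun _ : Fin d' => 0) s from
        Equiv.sum_comp e.symm _]
      rw [Fintype.sum_sum_type]
      simp
    rw [hAeq, Matrix.det_mul, Matrix.det_diagonal, hCdet, prod_single, hsem,
      HahnSeries.C_apply, HahnSeries.single_mul_single, zero_add, mul_one]
  refine ⟨v, ?_, ?_, ?_⟩
  · intro m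
    show v m ∈ X
    have hm : v m = fun p => (single (em m) (bb m p) : LaurentSeries F) := rfl
    rcases hsm : e.symm m with l | l
    · have h1 : em m = -1 := by rw [hem]; show Sum.elim _ _ (e.symm m) = -1; rw [hsm]; rfl
      have h2 : bb m = bU l := by rw [hbb]; show Sum.elim bU bW (e.symm m) = bU l; rw [hsm]; rfl
      rw [hm, h1, h2]
      exact hsub (bU l) (Submodule.coe_mem _)
    · have h1 : em m = 0 := by rw [hem]; show Sum.elim _ _ (e.symm m) = 0; rw [hsm]; rfl
      have h2 : bb m = bW l := by rw [hbb]; show Sum.elim bU bW (e.symm m) = bW l; rw [hsm]; rfl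
      rw [hm, h1, h2]
      apply hEX
      apply mem_stdLattice_of_vanish
      intro p g hg
      exact HahnSeries.coeff_single_of_ne (by omega)
  · rw [hdet2]
    exact HahnSeries.single_ne_zero hMatdet
  · rw [hdet2, HahnSeries.order_single hMatdet, neg_neg]

end Aux3
/-- The case `P = L + M` of the proof of the main theorem for close lattices:
if the cut value `k + dim(U₁+U₂)` achieves `fᵗ_{ijk}(L,M,N)`, then the four
bounds `fᵗ_{i,j+k}(L,P) ≤ dim(U₁+U₂)`, `fᵗ_{j,i+k}(M,P) ≤ dim(U₁+U₂)`,
`fᵗ_{k,i+j}(N,P) ≤ k + dim(U₁+U₂)` and `fᵗₙ(P) = dim(U₁+U₂)` hold, whence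
`fᵗ_{i,j+k}(L,P) + fᵗ_{j,i+k}(M,P) + fᵗ_{k,i+j}(N,P) - 2fᵗₙ(P) ≤ fᵗ_{ijk}(L,M,N)`. -/
theorem close_lattices_cut_LM {F : Type*} [Field F] {n : ℕ} (i j k : ℕ)
    (hijk : i + j + k = n)
    (L M N : Submodule (PowerSeries F) (Fin n → LaurentSeries F))
    (hEL : stdLattice F n ≤ L) (hEM : stdLattice F n ≤ M) (hEN : stdLattice F n ≤ N)
    (hLt : L ≤ tInvStdLattice F n) (hMt : M ≤ tInvStdLattice F n)
    (hNt : N ≤ tInvStdLattice F n)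
    (U₁ U₂ U₃ : Submodule F (Fin n → F))
    (hU₁ : ∀ u : Fin n → F, u ∈ U₁ ↔
      (fun p => (HahnSeries.single (-1) (u p) : LaurentSeries F)) ∈ L)
    (hU₂ : ∀ u : Fin n → F, u ∈ U₂ ↔
      (fun p => (HahnSeries.single (-1) (u p) : LaurentSeries F)) ∈ M)
    (hU₃ : ∀ u : Fin n → F, u ∈ U₃ ↔
      (fun p => (HahnSeries.single (-1) (u p) : LaurentSeries F)) ∈ N)
    (g : ℤ) (hg : IsGreatest (detValSet (cols3 L M N i j)) g)
    (hgval : g = (k : ℤ) + Module.finrank F ↥(U₁ ⊔ U₂))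
    (hmin1 : g ≤ ((i : ℤ) + j + k))
    (hmin2 : g ≤ (j : ℤ) + k + Module.finrank F ↥U₁)
    (hmin3 : g ≤ (i : ℤ) + k + Module.finrank F ↥U₂)
    (hmin4 : g ≤ (i : ℤ) + j + Module.finrank F ↥U₃)
    (hmin5 : g ≤ (j : ℤ) + Module.finrank F ↥(U₁ ⊔ U₃))
    (hmin6 : g ≤ (i : ℤ) + Module.finrank F ↥(U₂ ⊔ U₃))
    (hmin7 : g ≤ (Module.finrank F ↥(U₁ ⊔ U₂ ⊔ U₃) : ℤ)) :
    (∀ z ∈ detValSet (cols2 L (L ⊔ M) i), z ≤ (Module.finrank F ↥(U₁ ⊔ U₂) : ℤ)) ∧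
    (∀ z ∈ detValSet (cols2 M (L ⊔ M) j), z ≤ (Module.finrank F ↥(U₁ ⊔ U₂) : ℤ)) ∧
    (∀ z ∈ detValSet (cols2 N (L ⊔ M) k),
      z ≤ (k : ℤ) + Module.finrank F ↥(U₁ ⊔ U₂)) ∧
    IsGreatest (detValSet (fun _ : Fin n => L ⊔ M))
      ((Module.finrank F ↥(U₁ ⊔ U₂) : ℤ)) ∧
    (∀ fLP fMP fNP fP : ℤ,
      IsGreatest (detValSet (cols2 L (L ⊔ M) i)) fLP →
      IsGreatest (detValSet (cols2 M (L ⊔ M) j)) fMP →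
      IsGreatest (detValSet (cols2 N (L ⊔ M) k)) fNP →
      IsGreatest (detValSet (fun _ : Fin n => L ⊔ M)) fP →
      fLP + fMP + fNP - 2 * fP ≤ g) := by
  have hPle : L ⊔ M ≤ tInvStdLattice F n := sup_le hLt hMt
  have hELP : stdLattice F n ≤ L ⊔ M := le_trans hEL le_sup_left
  have memU : ∀ x ∈ L ⊔ M, (fun p => (x p).coeff (-1)) ∈ U₁ ⊔ U₂ :=
    fun x hx => coeff_neg_one_mem_sup hEL hLt hU₁ hEM hMt hU₂ hx
  have part1 : ∀ z ∈ detValSet (cols2 L (L ⊔ M) i),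
      z ≤ (Module.finrank F ↥(U₁ ⊔ U₂) : ℤ) := by
    rintro z ⟨v, hvmem, hdetne, rfl⟩
    have hvP : ∀ m, v m ∈ L ⊔ M := by
      intro m
      have h0 : v m ∈ (if ((m : ℕ) < i) then L else L ⊔ M) := hvmem m
      split at h0
      · exact (le_sup_left : L ≤ L ⊔ M) h0
      · exact h0
    exact detval_le v
      (fun m p g hg => tInvStdLattice_le_vanishBelow (hPle (hvP m)) p g hg)
      (U₁ ⊔ U₂) (fun m => memU _ (hvP m)) hdetne
  have part2 : ∀ z ∈ detValSet (cols2 M (L ⊔ M) j),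
      z ≤ (Module.finrank F ↥(U₁ ⊔ U₂) : ℤ) := by
    rintro z ⟨v, hvmem, hdetne, rfl⟩
    have hvP : ∀ m, v m ∈ L ⊔ M := by
      intro m
      have h0 : v m ∈ (if ((m : ℕ) < j) then M else L ⊔ M) := hvmem m
      split at h0
      · exact (le_sup_right : M ≤ L ⊔ M) h0
      · exact h0
    exact detval_le v
      (fun m p g hg => tInvStdLattice_le_vanishBelow (hPle (hvP m)) p g hg)
      (U₁ ⊔ U₂) (fun m => memU _ (hvP m)) hdetne
  have part3 : ∀ z ∈ detValSet (cols2 N (L ⊔ M) k),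
      z ≤ (k : ℤ) + Module.finrank F ↥(U₁ ⊔ U₂) := by
    rintro z ⟨v, hvmem, hdetne, rfl⟩
    have hvT : ∀ m, v m ∈ tInvStdLattice F n := by
      intro m
      have h0 : v m ∈ (if ((m : ℕ) < k) then N else L ⊔ M) := hvmem m
      split at h0
      · exact hNt h0
      · exact hPle h0
    have hu : ∀ m : Fin n, k ≤ (m : ℕ) → (fun p => (v m p).coeff (-1)) ∈ U₁ ⊔ U₂ := by
      intro m hm
      have h0 : v m ∈ (if ((m : ℕ) < k) then N else L ⊔ M) := hvmem m
      rw [if_neg (by omega)] at h0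
      exact memU _ h0
    exact detval_le' k (by omega) v
      (fun m p g hg => tInvStdLattice_le_vanishBelow (hvT m) p g hg) (U₁ ⊔ U₂) hu hdetne
  have part4 : IsGreatest (detValSet (fun _ : Fin n => L ⊔ M))
      ((Module.finrank F ↥(U₁ ⊔ U₂) : ℤ)) := by
    constructor
    · apply detval_mem (L ⊔ M) hELP (U₁ ⊔ U₂)
      intro u hu
      rcases Submodule.mem_sup.1 hu with ⟨a, ha, b, hb, rfl⟩
      have h1 : (fun p => (HahnSeries.single (-1) ((a + b) p) : LaurentSeries F))
          = (fun p => (HahnSeries.single (-1) (a p) : LaurentSeries F))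
            + fun p => (HahnSeries.single (-1) (b p) : LaurentSeries F) := by
        funext p
        show (HahnSeries.single (-1) (a p + b p) : LaurentSeries F)
          = HahnSeries.single (-1) (a p) + HahnSeries.single (-1) (b p)
        exact map_add (HahnSeries.single.addMonoidHom (-1)) (a p) (b p)
      rw [h1]
      exact Submodule.add_mem_sup ((hU₁ a).1 ha) ((hU₂ b).1 hb)
    · rintro z ⟨v, hvmem, hdetne, rfl⟩
      exact detval_le v
        (fun m p g hg => tInvStdLattice_le_vanishBelow (hPle (hvmem m)) p g hg)
        (U₁ ⊔ U₂) (fun m => memU _ (hvmem m)) hdetne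
  refine ⟨part1, part2, part3, part4, ?_⟩
  intro fLP fMP fNP fP h1 h2 h3 h4
  have hfP : fP = (Module.finrank F ↥(U₁ ⊔ U₂) : ℤ) := h4.unique part4
  have e1 := part1 fLP h1.1
  have e2 := part2 fMP h2.1
  have e3 := part3 fNP h3.1
  rw [hgval]
  omega

end
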